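/- Let S be a string of length n, let ℓ ≥ 1 be an integer, and for i = 1,...,⌊n/ℓ⌋ let B_i = S[(i−1)ℓ+1 .. iℓ] be the i-th length-ℓ block of S. Call B_i marked if either i ≥ 2 and the occurrence of B_{i−1}·B_i starting at position (i−2)ℓ+1 is the leftmost occurrence of the string B_{i−1}·B_i in S, or i < ⌊n/ℓ⌋ and the occurrence of B_i·B_{i+1} starting at position (i−1)ℓ+1 is the leftmost occurrence of the string B_i·B_{i+1} in S. Then the number of marked blocks is at most 4·δ(S) + 4. -/

import Mathlib

/-- The set of distinct length-`k` contiguous substrings of `S`. -/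
def substrings {α : Type} [DecidableEq α] (S : List α) (k : ℕ) : Finset (List α) :=
  ((Finset.range (S.length + 1)).image (fun i => (S.drop i).take k)).filter
    (fun t => t.length = k)

/-- `d_k(S)`: the number of distinct length-`k` substrings of `S`. -/
def subCount {α : Type} [DecidableEq α] (S : List α) (k : ℕ) : ℕ :=
  (substrings S k).card

/-- The measure `δ(S) = max { d_k(S)/k : 1 ≤ k ≤ |S| }` (with value 0 for the empty string). -/
def delta {α : Type} [DecidableEq α] (S : List α) : ℚ :=
  if h : S = [] then 0
  else
    (Finset.Icc 1 S.length).sup'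
      (Finset.nonempty_Icc.mpr (Nat.one_le_iff_ne_zero.mpr
        (fun h0 => h (List.length_eq_zero_iff.mp h0))))
      (fun k => (subCount S k : ℚ) / k)

/-- The string `T` occurs in `S` starting at the (0-based) position `p`. -/
def occursAt {α : Type} (S T : List α) (p : ℕ) : Prop :=
  p + T.length ≤ S.length ∧ (S.drop p).take T.length = T

/-- The occurrence of `T` in `S` starting at the (0-based) position `p` is leftmost:
`T` occurs at `p` and at no smaller position. -/
def IsLeftmostOcc {α : Type} (S T : List α) (p : ℕ) : Prop :=
  occursAt S T p ∧ ∀ q < p, ¬ occursAt S T q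

/-- The `i`-th (1-based) length-`ℓ` block `B_i = S[(i−1)ℓ+1 .. iℓ]` of `S`. -/
def blockOf {α : Type} (S : List α) (ℓ i : ℕ) : List α :=
  (S.drop ((i - 1) * ℓ)).take ℓ

/-- Block `B_i` is marked: either `i ≥ 2` and the occurrence of `B_{i−1}·B_i` starting
at (1-based) position `(i−2)ℓ+1` is the leftmost occurrence of `B_{i−1}·B_i` in `S`,
or `i < ⌊n/ℓ⌋` and the occurrence of `B_i·B_{i+1}` starting at (1-based) position
`(i−1)ℓ+1` is the leftmost occurrence of `B_i·B_{i+1}` in `S`. -/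
def MarkedBlock {α : Type} (S : List α) (ℓ i : ℕ) : Prop :=
  (2 ≤ i ∧ IsLeftmostOcc S (blockOf S ℓ (i - 1) ++ blockOf S ℓ i) ((i - 2) * ℓ)) ∨
  (i < S.length / ℓ ∧ IsLeftmostOcc S (blockOf S ℓ i ++ blockOf S ℓ (i + 1)) ((i - 1) * ℓ))

section AuxLemmas

variable {α : Type}

lemma length_window (S : List α) {q K : ℕ} (h : q + K ≤ S.length) :
    ((S.drop q).take K).length = K := by
  simp only [List.length_take, List.length_drop]
  omega

lemma occursAt_window (S : List α) {q K : ℕ} (h : q + K ≤ S.length) :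
    occursAt S ((S.drop q).take K) q := by
  refine ⟨?_, ?_⟩ <;> rw [length_window S h]
  exact h

lemma window_shift (S : List α) {r q K : ℕ}
    (h : (S.drop r).take K = (S.drop q).take K) (a L : ℕ) (haL : a + L ≤ K) :
    (S.drop (r + a)).take L = (S.drop (q + a)).take L := by
  have h2 := congrArg (fun l : List α => (l.drop a).take L) h
  simp only [List.drop_take, List.drop_drop, List.take_take] at h2
  rwa [min_eq_left (by omega)] at h2

lemma window_mem_substrings [DecidableEq α] (S : List α) {q K : ℕ}
    (h : q + K ≤ S.length) : (S.drop q).take K ∈ substrings S K := by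
  unfold substrings
  rw [Finset.mem_filter]
  refine ⟨Finset.mem_image.mpr ⟨q, Finset.mem_range.mpr (by omega), rfl⟩, length_window S h⟩

lemma leftmost_unique {S T : List α} {p q : ℕ}
    (hp : IsLeftmostOcc S T p) (hq : IsLeftmostOcc S T q) : p = q := by
  rcases lt_trichotomy p q with h | h | h
  · exact absurd hp.1 (hq.2 p h)
  · exact h
  · exact absurd hq.1 (hp.2 q h)

lemma pair_eq (S : List α) (ℓ : ℕ) {j : ℕ} (hj : 2 ≤ j) :
    blockOf S ℓ (j - 1) ++ blockOf S ℓ j = (S.drop ((j - 2) * ℓ)).take (2 * ℓ) := by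
  unfold blockOf
  have h1 : j - 1 - 1 = j - 2 := by omega
  have h2 : (j - 1) * ℓ = (j - 2) * ℓ + ℓ := by
    rw [show j - 1 = (j - 2) + 1 by omega, Nat.add_mul, one_mul]
  rw [h1, h2, two_mul, List.take_add, List.drop_drop]

lemma delta_nonneg [DecidableEq α] (S : List α) : 0 ≤ delta S := by
  unfold delta
  split_ifs with h
  · exact le_refl 0
  · have h1 : 1 ∈ Finset.Icc 1 S.length :=
      Finset.mem_Icc.mpr ⟨le_refl 1, Nat.one_le_iff_ne_zero.mpr
        (fun h0 => h (List.length_eq_zero_iff.mp h0))⟩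
    refine le_trans ?_ (Finset.le_sup' (fun k => (subCount S k : ℚ) / k) h1)
    positivity

lemma delta_ge [DecidableEq α] (S : List α) {k : ℕ} (h1 : 1 ≤ k) (h2 : k ≤ S.length) :
    (subCount S k : ℚ) / k ≤ delta S := by
  unfold delta
  have hS : S ≠ [] := by
    intro h
    rw [h] at h2
    simp at h2
    omega
  rw [dif_neg hS]
  exact Finset.le_sup' (fun k => (subCount S k : ℚ) / k) (Finset.mem_Icc.mpr ⟨h1, h2⟩)

lemma euclid_unique {ℓ x y b b' : ℕ} (hb : b < ℓ) (hb' : b' < ℓ)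
    (h : x * ℓ + b = y * ℓ + b') : x = y ∧ b = b' := by
  have hx : (x * ℓ + b) / ℓ = x := by
    rw [mul_comm, Nat.mul_add_div (by omega), Nat.div_eq_of_lt hb, Nat.add_zero]
  have hy : (y * ℓ + b') / ℓ = y := by
    rw [mul_comm, Nat.mul_add_div (by omega), Nat.div_eq_of_lt hb', Nat.add_zero]
  have hxy : x = y := by rw [← hx, ← hy, h]
  rw [hxy] at h
  exact ⟨hxy, by omega⟩

/-- Any window of length `4ℓ-1` that fully contains a leftmost aligned occurrence of a
block pair is itself a leftmost occurrence. -/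
lemma main_leftmost (S : List α) {ℓ j q : ℕ} (hℓ : 1 ≤ ℓ) (hj : 2 ≤ j)
    (hjl : j * ℓ ≤ S.length)
    (hQ : IsLeftmostOcc S (blockOf S ℓ (j - 1) ++ blockOf S ℓ j) ((j - 2) * ℓ))
    (hq1 : q ≤ (j - 2) * ℓ) (hq2 : (j - 2) * ℓ + 2 * ℓ ≤ q + (4 * ℓ - 1))
    (hqn : q + (4 * ℓ - 1) ≤ S.length) :
    IsLeftmostOcc S ((S.drop q).take (4 * ℓ - 1)) q := by
  have hpa : q + ((j - 2) * ℓ - q) = (j - 2) * ℓ := by omega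
  set a := (j - 2) * ℓ - q with ha
  have hTlen : (j - 2) * ℓ + 2 * ℓ ≤ S.length := by
    have e1 : (j - 2) * ℓ = j * ℓ - 2 * ℓ := Nat.sub_mul j 2 ℓ
    have e2 : 2 * ℓ ≤ j * ℓ := Nat.mul_le_mul_right ℓ hj
    omega
  have hT : blockOf S ℓ (j - 1) ++ blockOf S ℓ j = (S.drop ((j - 2) * ℓ)).take (2 * ℓ) :=
    pair_eq S ℓ hj
  refine ⟨occursAt_window S hqn, ?_⟩
  intro q' hq' hocc
  obtain ⟨ho1, ho2⟩ := hocc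
  rw [length_window S hqn] at ho1 ho2
  have haK : a + 2 * ℓ ≤ 4 * ℓ - 1 := by omega
  have hsub : (S.drop (q' + a)).take (2 * ℓ) = (S.drop (q + a)).take (2 * ℓ) :=
    window_shift S ho2 a (2 * ℓ) haK
  refine hQ.2 (q' + a) (by omega) ?_
  rw [hT]
  refine ⟨?_, ?_⟩ <;> rw [length_window S hTlen]
  · omega
  · rw [← hpa]
    exact hsub

end AuxLemmas

/-- For every string `S` of length `n` and block length `ℓ ≥ 1`, the number of marked
blocks among `B_1, ..., B_{⌊n/ℓ⌋}` is at most `4·δ(S) + 4`. -/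
theorem marked_blocks_le {α : Type} [DecidableEq α] (S : List α) (ℓ : ℕ) (hℓ : 1 ≤ ℓ) :
    (({i : ℕ | 1 ≤ i ∧ i ≤ S.length / ℓ ∧ MarkedBlock S ℓ i}.ncard : ℚ)) ≤
      4 * delta S + 4 := by
  classical
  set N := S.length / ℓ with hN
  set M : Finset ℕ := (Finset.Icc 1 N).filter (fun i => MarkedBlock S ℓ i) with hM
  have hset : {i : ℕ | 1 ≤ i ∧ i ≤ N ∧ MarkedBlock S ℓ i} = ↑M := by
    ext i
    simp [hM, Finset.mem_Icc, and_assoc]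
  rw [hset, Set.ncard_coe_finset]
  have hδ0 : 0 ≤ delta S := delta_nonneg S
  by_cases hbig : 4 * ℓ - 1 ≤ S.length
  case neg =>
    -- trivial case: there are at most 3 blocks
    have hN3 : N < 4 := by
      rw [hN]
      exact (Nat.div_lt_iff_lt_mul (by omega)).mpr (by omega)
    have hMcard : M.card ≤ 3 := by
      refine le_trans (Finset.card_filter_le _ _) ?_
      rw [Nat.card_Icc]
      omega
    have : (M.card : ℚ) ≤ 3 := by exact_mod_cast hMcard
    linarith
  case pos =>
    set good : ℕ → Prop := fun i => 3 ≤ i ∧ (i + 2) * ℓ ≤ S.length + 1 with hgood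
    set M' := M.filter good with hM'
    -- the key fact: for each good marked block, the ℓ windows of length 4ℓ-1 ending at
    -- position (i-2)ℓ are leftmost occurrences
    have key : ∀ i ∈ M', ∀ b, b < ℓ →
        IsLeftmostOcc S ((S.drop ((i - 3) * ℓ + 1 + b)).take (4 * ℓ - 1)) ((i - 3) * ℓ + 1 + b)
        ∧ ((i - 3) * ℓ + 1 + b) + (4 * ℓ - 1) ≤ S.length := by
      intro i hi b hb
      have him : i ∈ M := (Finset.mem_filter.mp hi).1
      obtain ⟨hi3, hiN2⟩ : good i := (Finset.mem_filter.mp hi).2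
      have hiIcc := Finset.mem_filter.mp him
      have hmark : MarkedBlock S ℓ i := hiIcc.2
      have hiN : i ≤ N := (Finset.mem_Icc.mp hiIcc.1).2
      obtain ⟨j, hj2, hjN, hij, hQ⟩ : ∃ j, 2 ≤ j ∧ j ≤ N ∧ (j = i ∨ j = i + 1) ∧
          IsLeftmostOcc S (blockOf S ℓ (j - 1) ++ blockOf S ℓ j) ((j - 2) * ℓ) := by
        rcases hmark with ⟨h2i, hL⟩ | ⟨hlt, hL⟩
        · exact ⟨i, h2i, hiN, Or.inl rfl, hL⟩
        · refine ⟨i + 1, by omega, by omega, Or.inr rfl, ?_⟩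
          have e1 : i + 1 - 1 = i := by omega
          have e2 : i + 1 - 2 = i - 1 := by omega
          rw [e1, e2]
          exact hL
      rw [hN] at hjN
      have hjl : j * ℓ ≤ S.length := (Nat.le_div_iff_mul_le (by omega)).mp hjN
      have e2 : (i - 2) * ℓ = (i - 3) * ℓ + ℓ := by
        rw [show i - 2 = (i - 3) + 1 by omega, Nat.add_mul, one_mul]
      have e1 : (i - 1) * ℓ = (i - 3) * ℓ + 2 * ℓ := by
        rw [show i - 1 = (i - 3) + 2 by omega, Nat.add_mul]
      have e5 : (i + 2) * ℓ = (i - 3) * ℓ + 5 * ℓ := by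
        rw [show i + 2 = (i - 3) + 5 by omega, Nat.add_mul]
      have hqn : ((i - 3) * ℓ + 1 + b) + (4 * ℓ - 1) ≤ S.length := by omega
      have hj2l : (j - 2) * ℓ = (i - 3) * ℓ + ℓ ∨ (j - 2) * ℓ = (i - 3) * ℓ + 2 * ℓ := by
        rcases hij with h | h
        · left; rw [h]; exact e2
        · right; rw [h, show i + 1 - 2 = i - 1 by omega]; exact e1
      refine ⟨main_leftmost S hℓ hj2 hjl hQ ?_ ?_ hqn, hqn⟩
      · rcases hj2l with h | h <;> omega
      · rcases hj2l with h | h <;> omega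
    -- counting: M'.card * ℓ ≤ subCount S (4ℓ-1)
    have hcount : M'.card * ℓ ≤ subCount S (4 * ℓ - 1) := by
      have hinj := Finset.card_le_card_of_injOn
        (s := M' ×ˢ Finset.range ℓ) (t := substrings S (4 * ℓ - 1))
        (fun pr => (S.drop ((pr.1 - 3) * ℓ + 1 + pr.2)).take (4 * ℓ - 1)) ?_ ?_
      · rwa [Finset.card_product, Finset.card_range] at hinj
      · rintro ⟨i, b⟩ hib
        rw [Finset.mem_coe, Finset.mem_product, Finset.mem_range] at hib
        exact window_mem_substrings S (key i hib.1 b hib.2).2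
      · rintro ⟨i, b⟩ hib ⟨i', b'⟩ hib' heq
        simp only [Finset.mem_coe, Finset.mem_product, Finset.mem_range] at hib hib'
        obtain ⟨hi, hb⟩ := hib
        obtain ⟨hi', hb'⟩ := hib'
        have h1 := (key i hi b hb).1
        have h2 := (key i' hi' b' hb').1
        simp only at heq
        rw [heq] at h1
        have hpos : (i' - 3) * ℓ + 1 + b' = (i - 3) * ℓ + 1 + b := leftmost_unique h2 h1
        obtain ⟨hii, hbb⟩ := euclid_unique (x := i' - 3) (y := i - 3) hb' hb (by omega)
        have hgi : 3 ≤ i := ((Finset.mem_filter.mp hi).2).1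
        have hgi' : 3 ≤ i' := ((Finset.mem_filter.mp hi').2).1
        have : i = i' := by omega
        simp [this, hbb]
    -- at most 4 non-good marked blocks
    have hbad : M.filter (fun i => ¬ good i) ⊆ {1, 2, N - 1, N} := by
      intro i hi
      rw [Finset.mem_filter] at hi
      obtain ⟨him, hng⟩ := hi
      rw [hM, Finset.mem_filter, Finset.mem_Icc] at him
      obtain ⟨⟨hi1, hiN⟩, _⟩ := him
      rw [hgood] at hng
      simp only [not_and_or, not_le] at hng
      simp only [Finset.mem_insert, Finset.mem_singleton]
      rcases hng with h | h
      · omega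
      · have hNl : N * ℓ ≤ S.length := by
          rw [hN]
          exact Nat.div_mul_le_self _ _
        by_contra hcon
        push_neg at hcon
        have hi2 : i + 2 ≤ N := by omega
        have : (i + 2) * ℓ ≤ N * ℓ := Nat.mul_le_mul_right ℓ hi2
        omega
    have hbadcard : (M.filter (fun i => ¬ good i)).card ≤ 4 := by
      refine le_trans (Finset.card_le_card hbad) ?_
      have a1 := Finset.card_insert_le 1 ({2, N - 1, N} : Finset ℕ)
      have a2 := Finset.card_insert_le 2 ({N - 1, N} : Finset ℕ)
      have a3 := Finset.card_insert_le (N - 1) ({N} : Finset ℕ)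
      simp only [Finset.card_singleton] at a3
      omega
    have hsplit : M'.card + (M.filter (fun i => ¬ good i)).card = M.card := by
      rw [hM']
      exact Finset.card_filter_add_card_filter_not good
    have hMM : M.card ≤ M'.card + 4 := by omega
    -- final arithmetic
    have hk1 : (1 : ℕ) ≤ 4 * ℓ - 1 := by omega
    have hdk : (subCount S (4 * ℓ - 1) : ℚ) ≤ delta S * (4 * ℓ - 1 : ℕ) := by
      have h1 : (subCount S (4 * ℓ - 1) : ℚ) / (4 * ℓ - 1 : ℕ) ≤ delta S :=
        delta_ge S hk1 hbig
      rw [div_le_iff₀ (by exact_mod_cast Nat.lt_of_lt_of_le Nat.zero_lt_one hk1)] at h1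
      exact h1
    have hkle : ((4 * ℓ - 1 : ℕ) : ℚ) ≤ 4 * ℓ := by
      have : (4 * ℓ - 1 : ℕ) ≤ 4 * ℓ := by omega
      exact_mod_cast this
    have hc1 : (M'.card : ℚ) * ℓ ≤ delta S * (4 * ℓ) := by
      calc (M'.card : ℚ) * ℓ ≤ (subCount S (4 * ℓ - 1) : ℚ) := by exact_mod_cast hcount
        _ ≤ delta S * (4 * ℓ - 1 : ℕ) := hdk
        _ ≤ delta S * (4 * ℓ) := by
            apply mul_le_mul_of_nonneg_left hkle hδ0
    have hlpos : (0 : ℚ) < ℓ := by exact_mod_cast hℓ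
    have hc2 : (M'.card : ℚ) ≤ 4 * delta S := by
      have h := hc1
      rw [show delta S * (4 * ℓ) = (4 * delta S) * (ℓ : ℚ) by ring] at h
      exact le_of_mul_le_mul_right h hlpos
    have hMMq : (M.card : ℚ) ≤ (M'.card : ℚ) + 4 := by exact_mod_cast hMM
    linarith
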